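/- Let G be a finite group with a normal p-subgroup P for an odd prime p and a cyclic 2-subgroup T = ⟨t⟩ such that G = PT. Let U and V be nonzero real G-modules with U^G = V^G = 0. If U and V are isomorphic as P-modules, then det(t on U) = det(t on V). -/

import Mathlib

open Polynomial Module LinearMap

section Tools

variable {W : Type*} [AddCommGroup W] [Module ℝ W] [FiniteDimensional ℝ W]

lemma eval_charpoly_det (f : Module.End ℝ W) (x : ℝ) :
    f.charpoly.eval x = LinearMap.det (x • (1 : Module.End ℝ W) - f) := by
  classical
  let b := Module.Free.chooseBasis ℝ W
  rw [← f.charpoly_toMatrix b, ← LinearMap.det_toMatrix b]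
  rw [Matrix.charpoly, ← Polynomial.coe_evalRingHom, RingHom.map_det]
  congr 1
  ext i j
  by_cases h : i = j
  · subst h
    simp [Matrix.charmatrix_apply_eq, LinearMap.toMatrix_apply, map_sub, map_smul,
      Matrix.one_apply]
  · simp [Matrix.charmatrix_apply_ne _ _ _ h, LinearMap.toMatrix_apply, map_sub, map_smul,
      Matrix.one_apply, h, Finsupp.single_apply, Ne.symm h]

lemma isRoot_charpoly_iff (f : Module.End ℝ W) (μ : ℝ) :
    f.charpoly.IsRoot μ ↔ ∃ v : W, v ≠ 0 ∧ f v = μ • v := by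
  rw [IsRoot, eval_charpoly_det]
  set g : Module.End ℝ W := μ • (1 : Module.End ℝ W) - f with hg
  have h := (LinearMap.not_hasEigenvalue_zero_tfae g).out 3 5
  constructor
  · intro hdet
    have := h.not
    push_neg at this
    obtain ⟨v, hv0, hvne⟩ := this.mp hdet
    refine ⟨v, hvne, ?_⟩
    have : μ • v - f v = 0 := by simpa [hg, sub_eq_zero] using hv0
    rw [eq_comm, ← sub_eq_zero]
    simpa using this
  · intro ⟨v, hvne, hfv⟩
    by_contra hdet
    have hker := h.mp hdet
    have : g v = 0 := by simp [hg, hfv]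
    exact hvne (hker v this)

end Tools

section Tools2

variable {W : Type*} [AddCommGroup W] [Module ℝ W] [FiniteDimensional ℝ W]

lemma eval_zero_pos_of_roots_neg {p : ℝ[X]} (hp : p.Monic)
    (h : ∀ μ : ℝ, p.IsRoot μ → μ < 0) : 0 < p.eval 0 := by
  rcases eq_or_ne p.natDegree 0 with h0 | h0
  · rw [hp.natDegree_eq_zero] at h0
    simp [h0]
  · have hdeg : 0 < p.degree := by
      exact Polynomial.natDegree_pos_iff_degree_pos.mp (Nat.pos_of_ne_zero h0)
    have htop := p.tendsto_atTop_of_leadingCoeff_nonneg hdeg (by rw [hp.leadingCoeff]; norm_num)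
    obtain ⟨M, hM⟩ := (htop.eventually_ge_atTop 1).exists_forall_of_atTop
    have hM1 : 0 < p.eval (max M 0) := lt_of_lt_of_le one_pos (hM _ (le_max_left _ _))
    by_contra hc
    push_neg at hc
    have h0ne : p.eval 0 ≠ 0 := fun hz => absurd (h 0 hz) (lt_irrefl 0)
    have hlt : p.eval 0 < 0 := lt_of_le_of_ne hc h0ne
    have : (0:ℝ) ∈ Set.Icc (p.eval 0) (p.eval (max M 0)) := ⟨hc, le_of_lt hM1⟩
    obtain ⟨c, hc1, hc2⟩ := intermediate_value_Icc (le_max_right M 0)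
      (p.continuous_aeval.continuousOn) this
    have := h c hc2
    linarith [hc1.1]

lemma sign_det_of_roots_neg (f : Module.End ℝ W)
    (h : ∀ μ : ℝ, f.charpoly.IsRoot μ → μ < 0) :
    0 < (-1 : ℝ) ^ (finrank ℝ W) * LinearMap.det f := by
  rw [LinearMap.det_eq_sign_charpoly_coeff, ← mul_assoc, ← mul_pow]
  norm_num
  rw [Polynomial.coeff_zero_eq_eval_zero]
  exact eval_zero_pos_of_roots_neg (f.charpoly_monic) h

lemma det_pos_of_roots_pos (f : Module.End ℝ W)
    (h : ∀ μ : ℝ, f.charpoly.IsRoot μ → 0 < μ) : 0 < LinearMap.det f := by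
  have h2 : ∀ μ : ℝ, (-f).charpoly.IsRoot μ → μ < 0 := by
    intro μ hμ
    rw [isRoot_charpoly_iff] at hμ
    obtain ⟨v, hv, hfv⟩ := hμ
    have : f v = (-μ) • v := by
      rw [neg_smul, ← hfv]; simp
    have : f.charpoly.IsRoot (-μ) := (isRoot_charpoly_iff f (-μ)).2 ⟨v, hv, this⟩
    have := h _ this
    linarith
  have := sign_det_of_roots_neg (-f) h2
  have hneg : LinearMap.det (-f) = (-1 : ℝ) ^ (finrank ℝ W) * LinearMap.det f := by
    rw [show -f = (-1 : ℝ) • f by simp, LinearMap.det_smul]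
  rw [hneg, ← mul_assoc, ← mul_pow] at this
  norm_num at this
  exact this

lemma real_pm_one {x : ℝ} {m : ℕ} (hm : m ≠ 0) (h : x ^ m = 1) : x = 1 ∨ x = -1 := by
  have habs : |x| = 1 := by
    have h1 : |x| ^ m = 1 := by rw [← abs_pow, h, abs_one]
    rcases lt_trichotomy |x| 1 with hlt | heq | hgt
    · have := pow_lt_one₀ (abs_nonneg x) hlt hm
      rw [h1] at this; linarith
    · exact heq
    · have := one_lt_pow₀ hgt hm
      rw [h1] at this; linarith
  rcases abs_eq (le_of_lt one_pos) |>.mp habs with h' | h'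
  · exact Or.inl h'
  · exact Or.inr h'

lemma eig_pow_eq_one (f : Module.End ℝ W) {n : ℕ} {μ : ℝ} {v : W} (hv : v ≠ 0)
    (hfv : f v = μ • v) (hfn : f ^ n = 1) : μ ^ n = 1 := by
  have key : ∀ m : ℕ, (f ^ m) v = μ ^ m • v := by
    intro m
    induction m with
    | zero => simp
    | succ m ih =>
      rw [pow_succ, Module.End.mul_apply, hfv, map_smul, ih, smul_smul, pow_succ, mul_comm]
  have key := key n
  rw [hfn] at key
  have : (μ ^ n - 1) • v = 0 := by
    rw [sub_smul, one_smul, ← key]; simp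
  rcases smul_eq_zero.mp this with h | h
  · linarith [sub_eq_zero.mp (by linarith [h] : μ ^ n - 1 = 0)]
  · exact absurd h hv

lemma det_of_twopow_order (f : Module.End ℝ W) (k : ℕ) (hf : f ^ (2 ^ k) = 1)
    (hfix : ∀ v : W, f v = v → v = 0) :
    LinearMap.det f = (-1 : ℝ) ^ (finrank ℝ W) := by
  have h2k : (2 : ℕ) ^ k ≠ 0 := pow_ne_zero k two_ne_zero
  have hdet : (LinearMap.det f) ^ (2 ^ k) = 1 := by
    rw [← map_pow, hf]; simp
  have hpm := real_pm_one h2k hdet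
  have hroots : ∀ μ : ℝ, f.charpoly.IsRoot μ → μ < 0 := by
    intro μ hμ
    obtain ⟨v, hv, hfv⟩ := (isRoot_charpoly_iff f μ).1 hμ
    have hμpow : μ ^ (2 ^ k) = 1 := by
      have : (μ : ℝ) ^ (2 ^ k) = 1 := eig_pow_eq_one f hv hfv hf
      exact this
    rcases real_pm_one h2k hμpow with h1 | h1
    · exfalso
      apply hv
      apply hfix
      rw [hfv, h1, one_smul]
    · rw [h1]; norm_num
  have hsign := sign_det_of_roots_neg f hroots
  rcases Nat.even_or_odd (finrank ℝ W) with he | ho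
  · rw [he.neg_one_pow] at *
    rcases hpm with h | h
    · exact h
    · linarith
  · rw [ho.neg_one_pow] at *
    rcases hpm with h | h
    · linarith
    · exact h

end Tools2

section Split

variable {W : Type*} [AddCommGroup W] [Module ℝ W] [FiniteDimensional ℝ W]

lemma charpoly_split (φ : Module.End ℝ W) {E F : Submodule ℝ W} (hEF : IsCompl E F)
    (hE : Set.MapsTo φ E E) (hF : Set.MapsTo φ F F) :
    φ.charpoly = (φ.restrict hE).charpoly * (φ.restrict hF).charpoly := by
  let Fm := φ.restrict hE
  let Gm := φ.restrict hF
  let ψ := Fm.prodMap Gm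
  let e := Submodule.prodEquivOfIsCompl E F hEF
  let bV := Module.Free.chooseBasis ℝ E
  let bW := Module.Free.chooseBasis ℝ F
  let b := bV.prod bW
  have hψ : ψ = e.symm.conj φ := by
    apply b.ext
    simp only [Basis.prod_apply, coe_inl, coe_inr, prodMap_apply, LinearEquiv.conj_apply,
      LinearEquiv.symm_symm, Submodule.coe_prodEquivOfIsCompl, coe_comp, LinearEquiv.coe_coe,
      Function.comp_apply, coprod_apply, Submodule.coe_subtype, map_add, Sum.forall, Sum.elim_inl,
      map_zero, ZeroMemClass.coe_zero, add_zero, LinearEquiv.eq_symm_apply, and_self,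
      Submodule.coe_prodEquivOfIsCompl', restrict_coe_apply, implies_true, Sum.elim_inr, zero_add,
      e, ψ, Fm, Gm, b]
    exact ⟨fun _ => rfl, fun _ => rfl⟩
  rw [← e.symm.charpoly_conj φ, ← hψ]
  exact LinearMap.charpoly_prodMap Fm Gm

lemma det_split (φ : Module.End ℝ W) {E F : Submodule ℝ W} (hEF : IsCompl E F)
    (hE : Set.MapsTo φ E E) (hF : Set.MapsTo φ F F) :
    LinearMap.det φ = LinearMap.det (φ.restrict hE) * LinearMap.det (φ.restrict hF) := by
  rw [LinearMap.det_eq_sign_charpoly_coeff, LinearMap.det_eq_sign_charpoly_coeff,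
    LinearMap.det_eq_sign_charpoly_coeff, charpoly_split φ hEF hE hF,
    Polynomial.mul_coeff_zero, ← Submodule.finrank_add_eq_of_isCompl hEF, pow_add]
  ring

end Split

section Parity

variable {W : Type*} [AddCommGroup W] [Module ℝ W] [FiniteDimensional ℝ W]

lemma avg_proj_facts (g : Module.End ℝ W) (m : ℕ) (hm : m ≠ 0) (hg : g ^ m = 1) :
    ∃ π : Module.End ℝ W, (∀ x, π (π x) = π x) ∧ g * π = π ∧ π * g = π ∧
      LinearMap.range π = LinearMap.ker (g - 1) := by
  obtain ⟨n, rfl⟩ : ∃ n, m = n + 1 := ⟨m - 1, (Nat.succ_pred_eq_of_pos (Nat.pos_of_ne_zero hm)).symm⟩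
  set π : Module.End ℝ W := ((n + 1 : ℕ) : ℝ)⁻¹ • ∑ j ∈ Finset.range (n + 1), g ^ j with hπ
  have hshift : ∑ j ∈ Finset.range (n + 1), g ^ (j + 1) = ∑ j ∈ Finset.range (n + 1), g ^ j := by
    rw [Finset.sum_range_succ, Finset.sum_range_succ']
    simp [hg]
  have hgπ : g * π = π := by
    have h1 : ∑ j ∈ Finset.range (n + 1), g * g ^ j = ∑ j ∈ Finset.range (n + 1), g ^ j := by
      rw [Finset.sum_congr rfl (fun j _ => (pow_succ' g j).symm)]
      exact hshift
    rw [hπ, mul_smul_comm, Finset.mul_sum, h1]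
  have hπg : π * g = π := by
    have h1 : ∑ j ∈ Finset.range (n + 1), g ^ j * g = ∑ j ∈ Finset.range (n + 1), g ^ j := by
      rw [Finset.sum_congr rfl (fun j _ => (pow_succ g j).symm)]
      exact hshift
    rw [hπ, smul_mul_assoc, Finset.sum_mul, h1]
  have hjπ : ∀ j : ℕ, g ^ j * π = π := by
    intro j
    induction j with
    | zero => simp
    | succ j ih => rw [pow_succ, mul_assoc, hgπ, ih]
  have hππ : π * π = π := by
    nth_rewrite 1 [hπ]
    rw [smul_mul_assoc, Finset.sum_mul]
    have : ∀ j ∈ Finset.range (n + 1), g ^ j * π = π := fun j _ => hjπ j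
    rw [Finset.sum_congr rfl this, Finset.sum_const, Finset.card_range]
    rw [← Nat.cast_smul_eq_nsmul ℝ, smul_smul]
    rw [inv_mul_cancel₀ (by positivity)]
    simp
  have hfix : ∀ x : W, g x = x → π x = x := by
    intro x hx
    have hjx : ∀ j : ℕ, (g ^ j) x = x := by
      intro j; induction j with
      | zero => simp
      | succ j ih => rw [pow_succ, Module.End.mul_apply, hx, ih]
    rw [hπ]
    simp only [LinearMap.smul_apply, LinearMap.sum_apply]
    rw [Finset.sum_congr rfl (fun j _ => hjx j), Finset.sum_const, Finset.card_range,
      ← Nat.cast_smul_eq_nsmul ℝ, smul_smul, inv_mul_cancel₀ (by positivity), one_smul]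
  refine ⟨π, fun x => by rw [← Module.End.mul_apply, hππ], hgπ, hπg, ?_⟩
  apply le_antisymm
  · rintro x ⟨y, rfl⟩
    simp only [LinearMap.mem_ker, LinearMap.sub_apply, Module.End.one_apply]
    rw [← Module.End.mul_apply, hgπ, sub_self]
  · intro x hx
    simp only [LinearMap.mem_ker, LinearMap.sub_apply, Module.End.one_apply, sub_eq_zero] at hx
    exact ⟨x, hfix x hx⟩

lemma finrank_ker_parity (g : Module.End ℝ W) (m : ℕ) (hm : Odd m) (hg : g ^ m = 1) :
    finrank ℝ W % 2 = finrank ℝ (LinearMap.ker (g - 1)) % 2 := by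
  have hm0 : m ≠ 0 := by rintro rfl; simp [Nat.odd_iff] at hm
  obtain ⟨π, hidem, hgπ, hπg, hrange⟩ := avg_proj_facts g m hm0 hg
  have hcompl : IsCompl (LinearMap.ker π) (LinearMap.range π) := by
    constructor
    · rw [disjoint_iff]
      apply le_bot_iff.mp
      rintro x ⟨hk, y, rfl⟩
      simp only [SetLike.mem_coe, LinearMap.mem_ker] at hk
      have : π (π y) = π y := hidem y
      rw [hk] at this
      simp [Submodule.mem_bot, ← this]
    · rw [codisjoint_iff]
      rw [eq_top_iff]
      intro x _
      have hx : x = (x - π x) + π x := by abel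
      rw [hx]
      apply Submodule.add_mem_sup
      · simp only [LinearMap.mem_ker, map_sub]
        rw [hidem x, sub_self]
      · exact ⟨x, rfl⟩
  have hdim := Submodule.finrank_add_eq_of_isCompl hcompl
  -- g preserves ker π
  have hmapsto : Set.MapsTo g (LinearMap.ker π) (LinearMap.ker π) := by
    intro x hx
    simp only [SetLike.mem_coe, LinearMap.mem_ker] at *
    rw [← Module.End.mul_apply, hπg, hx]
  set g' := g.restrict hmapsto with hg'
  have hg'm : g' ^ m = 1 := by
    have : g' ^ m = (g ^ m).restrict (by
      intro x hx
      simp only [SetLike.mem_coe, LinearMap.mem_ker] at *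
      rw [hg]; simpa using hx) := by
      exact Module.End.pow_restrict _ _
    rw [this]
    apply LinearMap.ext
    rintro ⟨x, hx⟩
    apply Subtype.ext
    simp [LinearMap.restrict_apply, hg]
  -- no real roots
  have hnoroot : ∀ μ : ℝ, ¬ g'.charpoly.IsRoot μ := by
    intro μ hμ
    obtain ⟨v, hv, hfv⟩ := (isRoot_charpoly_iff g' μ).1 hμ
    have hμm : μ ^ m = 1 := eig_pow_eq_one g' hv hfv hg'm
    have hμ1 : μ = 1 := by
      rcases real_pm_one hm0 hμm with h | h
      · exact h
      · exfalso; rw [h, hm.neg_one_pow] at hμm; linarith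
    rw [hμ1, one_smul] at hfv
    have hvfix : g v.1 = v.1 := by
      exact congrArg (Subtype.val) hfv
    have hvker : v.1 ∈ LinearMap.ker (g - 1) := by
      simp [LinearMap.mem_ker, sub_eq_zero, hvfix]
    rw [← hrange] at hvker
    have : v.1 ∈ (⊥ : Submodule ℝ W) := by
      rw [← hcompl.inf_eq_bot]
      exact ⟨v.2, hvker⟩
    exact hv (Subtype.ext (by simpa using this))
  have heven : Even (finrank ℝ (LinearMap.ker π)) := by
    have h1 := sign_det_of_roots_neg g' (fun μ hμ => absurd hμ (hnoroot μ))
    have h2 := det_pos_of_roots_pos g' (fun μ hμ => absurd hμ (hnoroot μ))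
    rcases Nat.even_or_odd (finrank ℝ (LinearMap.ker π)) with he | ho
    · exact he
    · exfalso; rw [ho.neg_one_pow] at h1; nlinarith
  rw [← hrange]
  obtain ⟨c, hc⟩ := heven
  omega

end Parity

section FPL

universe u

lemma fixed_point_lemma {H : Type*} [Group H] [Finite H] {p : ℕ} (hp : p.Prime) (hodd : Odd p)
    (hH : IsPGroup p H) :
    ∀ (n : ℕ) (W : Type u) (_ : AddCommGroup W) (_ : Module ℝ W) (_ : FiniteDimensional ℝ W)
      (ρ : Representation ℝ H W), finrank ℝ W ≤ n → Odd (finrank ℝ W) →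
      ∃ w : W, w ≠ 0 ∧ ∀ h : H, ρ h w = w := by
  intro n
  induction n with
  | zero =>
    intro W _ _ _ ρ hle hoddW
    exfalso
    interval_cases h : finrank ℝ W
    · simp [Nat.odd_iff] at hoddW
  | succ n IH =>
    intro W _ _ _ ρ hle hoddW
    by_cases htriv : ∀ (h : H) (w : W), ρ h w = w
    · have hpos : 0 < finrank ℝ W := by
        rcases hoddW with ⟨c, hc⟩; omega
      haveI := Module.nontrivial_of_finrank_pos (R := ℝ) hpos
      obtain ⟨w, hw⟩ := exists_ne (0 : W)
      exact ⟨w, hw, fun h => htriv h w⟩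
    · push_neg at htriv
      obtain ⟨h₀, w₀, hw₀⟩ := htriv
      set uρ := ρ.asGroupHom with huρ
      set Q := uρ.range with hQ
      haveI : Finite Q := Set.Finite.to_subtype (Set.finite_range uρ)
      have hQp : IsPGroup p Q := hH.of_surjective uρ.rangeRestrict uρ.rangeRestrict_surjective
      haveI : Nontrivial Q := by
        refine ⟨⟨uρ h₀, ⟨h₀, rfl⟩⟩, 1, ?_⟩
        intro hcon
        apply hw₀
        have : uρ h₀ = 1 := by
          simpa using congrArg Subtype.val hcon
        have h2 : (uρ h₀ : Module.End ℝ W) = 1 := by rw [this]; rfl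
        rw [ρ.asGroupHom_apply] at h2
        rw [h2]
        rfl
      haveI : Fact p.Prime := ⟨hp⟩
      haveI := hQp.center_nontrivial
      obtain ⟨z, hz1⟩ := exists_ne (1 : Subgroup.center Q)
      set zu : (Module.End ℝ W)ˣ := ((z : Q) : (Module.End ℝ W)ˣ) with hzu
      set zE : Module.End ℝ W := (zu : Module.End ℝ W) with hzE
      have hcomm : ∀ h : H, zE * ρ h = ρ h * zE := by
        intro h
        have hmem : uρ h ∈ Q := ⟨h, rfl⟩
        have := (Subgroup.mem_center_iff.mp z.2) ⟨uρ h, hmem⟩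
        have h2 := congrArg (Subtype.val) this
        simp only [MulMemClass.coe_mul] at h2
        have h3 := congrArg Units.val h2
        simp only [Units.val_mul] at h3
        rw [ρ.asGroupHom_apply] at h3
        exact h3.symm
      obtain ⟨k, hzk⟩ := hQp z.1
      have hzEk : zE ^ (p ^ k) = 1 := by
        have t1 : (z : Q) ^ (p ^ k) = 1 := hzk
        have : zu ^ (p ^ k) = 1 := by
          have := congrArg (fun a : Q => (a : (Module.End ℝ W)ˣ)) t1
          simpa [hzu] using this
        calc zE ^ (p ^ k) = ((zu ^ (p ^ k) : (Module.End ℝ W)ˣ) : Module.End ℝ W) := by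
              rw [hzE]; simp [Units.val_pow_eq_pow_val]
          _ = 1 := by rw [this]; rfl
      set E := LinearMap.ker (zE - 1) with hE
      have hEodd : Odd (finrank ℝ E) := by
        have := finrank_ker_parity zE (p ^ k) (hodd.pow) hzEk
        rw [Nat.odd_iff] at hoddW ⊢
        rw [← hE] at this
        omega
      have hElt : finrank ℝ E < finrank ℝ W := by
        apply Submodule.finrank_lt
        intro hcon
        apply hz1
        apply Subtype.ext
        apply Subtype.ext
        apply Units.ext
        have : ∀ w : W, zE w = w := by
          intro w
          have hw : w ∈ E := by rw [hcon]; trivial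
          rw [hE, LinearMap.mem_ker] at hw
          simpa [sub_eq_zero] using hw
        apply LinearMap.ext
        intro w
        simpa using this w
      have hmapsto : ∀ h : H, Set.MapsTo (ρ h) E E := by
        intro h x hx
        simp only [SetLike.mem_coe, hE, LinearMap.mem_ker, LinearMap.sub_apply,
          Module.End.one_apply, sub_eq_zero] at hx ⊢
        rw [← Module.End.mul_apply, hcomm h, Module.End.mul_apply, hx]
      set ρE : Representation ℝ H E :=
        { toFun := fun h => (ρ h).restrict (hmapsto h)
          map_one' := by
            apply LinearMap.ext; rintro ⟨x, hx⟩; apply Subtype.ext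
            simp [LinearMap.restrict_apply]
          map_mul' := by
            intro a b
            apply LinearMap.ext; rintro ⟨x, hx⟩; apply Subtype.ext
            simp [LinearMap.restrict_apply]; rfl } with hρE
      obtain ⟨w, hw0, hwfix⟩ := IH ↥E inferInstance inferInstance inferInstance ρE (by omega) hEodd
      refine ⟨w.1, fun hcon => hw0 (Subtype.ext hcon), fun h => ?_⟩
      have := congrArg Subtype.val (hwfix h)
      exact this

end FPL

section POS

universe u

def restrictSub {H W : Type*} [Group H] [AddCommGroup W] [Module ℝ W]
    (ρ : Representation ℝ H W) (E : Submodule ℝ W)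
    (hE : ∀ h : H, Set.MapsTo (ρ h) E E) : Representation ℝ H E where
  toFun h := (ρ h).restrict (hE h)
  map_one' := by
    apply LinearMap.ext; rintro ⟨x, hx⟩; apply Subtype.ext
    simp [LinearMap.restrict_apply]
  map_mul' a b := by
    apply LinearMap.ext; rintro ⟨x, hx⟩; apply Subtype.ext
    simp [LinearMap.restrict_apply]; rfl

lemma restrictSub_apply {H W : Type*} [Group H] [AddCommGroup W] [Module ℝ W]
    (ρ : Representation ℝ H W) (E : Submodule ℝ W)
    (hE : ∀ h : H, Set.MapsTo (ρ h) E E) (h : H) (x : E) :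
    ((restrictSub ρ E hE) h x : W) = ρ h (x : W) := rfl

lemma eig_pow_smul {W : Type*} [AddCommGroup W] [Module ℝ W] (f : Module.End ℝ W) {c : ℝ} {v : W}
    (h : f v = c • v) (m : ℕ) : (f ^ m) v = c ^ m • v := by
  induction m with
  | zero => simp
  | succ m ih => rw [pow_succ, Module.End.mul_apply, h, map_smul, ih, smul_smul, pow_succ, mul_comm]

lemma det_pos_of_commute {H : Type*} [Group H] [Finite H] {p : ℕ} (hp : p.Prime) (hodd : Odd p)
    (hH : IsPGroup p H) :
    ∀ (n : ℕ) (W : Type u) (_ : AddCommGroup W) (_ : Module ℝ W) (_ : FiniteDimensional ℝ W)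
      (ρ : Representation ℝ H W) (C : Module.End ℝ W),
      finrank ℝ W ≤ n →
      (∀ w : W, (∀ h : H, ρ h w = w) → w = 0) →
      (∀ h : H, C * ρ h = ρ h * C) →
      LinearMap.det C ≠ 0 → 0 < LinearMap.det C := by
  intro n
  induction n with
  | zero =>
    intro W _ _ _ ρ C hle hfix hC hdet
    apply det_pos_of_roots_pos
    intro μ hμ
    obtain ⟨v, hv, -⟩ := (isRoot_charpoly_iff C μ).1 hμ
    exfalso
    haveI : Subsingleton W := Module.finrank_zero_iff.mp (Nat.le_zero.mp hle)
    exact hv (Subsingleton.elim v 0)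
  | succ n IH =>
    intro W _ _ _ ρ C hle hfix hC hdet
    by_cases hroot : ∃ μ : ℝ, C.charpoly.IsRoot μ
    · obtain ⟨μ, hμ⟩ := hroot
      obtain ⟨v, hv, hCv⟩ := (isRoot_charpoly_iff C μ).1 hμ
      set d := finrank ℝ W with hd
      have hd0 : d ≠ 0 := by
        intro hcon
        have h1 : C.charpoly.natDegree = 0 := by rw [C.charpoly_natDegree, ← hd, hcon]
        have h2 : C.charpoly = 1 := (C.charpoly_monic.natDegree_eq_zero).mp h1
        rw [Polynomial.IsRoot, h2] at hμ
        simp at hμ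
      have hμ0 : μ ≠ 0 := by
        rintro rfl
        apply hdet
        rw [LinearMap.det_eq_sign_charpoly_coeff, Polynomial.coeff_zero_eq_eval_zero, hμ.eq_zero,
          mul_zero]
      set g : Module.End ℝ W := C - μ • 1 with hgdef
      set h₁ : Module.End ℝ W := g ^ d with hh₁
      have hgC : Commute g C := by
        apply Commute.sub_left (Commute.refl C)
        show (μ • (1 : Module.End ℝ W)) * C = C * (μ • 1)
        rw [smul_mul_assoc, mul_smul_comm, one_mul, mul_one]
      have hgρ : ∀ h : H, Commute g (ρ h) := by
        intro h
        apply Commute.sub_left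
        · exact hC h
        · show (μ • (1 : Module.End ℝ W)) * ρ h = ρ h * (μ • 1)
          rw [smul_mul_assoc, mul_smul_comm, one_mul, mul_one]
      have hh₁C : Commute h₁ C := hgC.pow_left d
      have hh₁ρ : ∀ h : H, Commute h₁ (ρ h) := fun h => (hgρ h).pow_left d
      set E := LinearMap.ker h₁ with hE
      set F := LinearMap.range h₁ with hF
      have hCE : Set.MapsTo C E E := by
        intro x hx
        simp only [SetLike.mem_coe, hE, LinearMap.mem_ker] at hx ⊢
        rw [← Module.End.mul_apply, hh₁C.eq, Module.End.mul_apply, hx, map_zero]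
      have hCF : Set.MapsTo C F F := by
        rintro x ⟨y, rfl⟩
        exact ⟨C y, by rw [← Module.End.mul_apply, hh₁C.eq, Module.End.mul_apply]⟩
      have hρE : ∀ h : H, Set.MapsTo (ρ h) E E := by
        intro h x hx
        simp only [SetLike.mem_coe, hE, LinearMap.mem_ker] at hx ⊢
        rw [← Module.End.mul_apply, (hh₁ρ h).eq, Module.End.mul_apply, hx, map_zero]
      have hρF : ∀ h : H, Set.MapsTo (ρ h) F F := by
        rintro h x ⟨y, rfl⟩
        exact ⟨ρ h y, by rw [← Module.End.mul_apply, (hh₁ρ h).eq, Module.End.mul_apply]⟩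
      have hker2 : LinearMap.ker (g ^ (d + d)) = LinearMap.ker (g ^ d) := by
        rw [Module.End.ker_pow_eq_ker_pow_finrank_of_le (by omega),
          Module.End.ker_pow_eq_ker_pow_finrank_of_le (le_of_eq hd)]
      have hdisj : Disjoint E F := by
        rw [disjoint_iff]
        apply le_bot_iff.mp
        rintro x ⟨hxE, hxF⟩
        obtain ⟨y, rfl⟩ := hxF
        simp only [SetLike.mem_coe, hE, LinearMap.mem_ker] at hxE
        have hy : y ∈ LinearMap.ker (g ^ (d + d)) := by
          rw [LinearMap.mem_ker, pow_add, Module.End.mul_apply]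
          exact hxE
        rw [hker2, LinearMap.mem_ker] at hy
        simp only [Submodule.mem_bot]
        exact hy
      have hsum := LinearMap.finrank_range_add_finrank_ker h₁
      rw [← hE, ← hF] at hsum
      have hcompl : IsCompl E F := by
        refine ⟨hdisj, codisjoint_iff.mpr ?_⟩
        apply Submodule.eq_top_of_finrank_eq
        have h2 := Submodule.finrank_sup_add_finrank_inf_eq E F
        rw [disjoint_iff.mp hdisj] at h2
        rw [finrank_bot] at h2
        omega
      have hgv : g v = 0 := by
        simp only [hgdef, LinearMap.sub_apply, LinearMap.smul_apply, Module.End.one_apply, hCv,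
          sub_self]
      have hvE : v ∈ E := by
        simp only [hE, LinearMap.mem_ker]
        obtain ⟨m, hm⟩ : ∃ m, d = m + 1 := ⟨d - 1, (Nat.succ_pred_eq_of_pos
          (Nat.pos_of_ne_zero hd0)).symm⟩
        rw [hh₁, hm, pow_succ, Module.End.mul_apply, hgv, map_zero]
      have hEpos : 0 < finrank ℝ E := by
        rw [Module.finrank_pos_iff]
        exact ⟨⟨v, hvE⟩, 0, fun hcon => hv (by simpa using congrArg Subtype.val hcon)⟩
      set CE := C.restrict hCE with hCEdef
      set CF := C.restrict hCF with hCFdef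
      have hdetsplit := det_split C hcompl hCE hCF
      rw [hdetsplit] at hdet ⊢
      have hdetE : LinearMap.det CE ≠ 0 := fun hcon => hdet (by rw [hcon, zero_mul])
      have hdetF : LinearMap.det CF ≠ 0 := fun hcon => hdet (by rw [hcon, mul_zero])
      have hCEroots : ∀ ν : ℝ, CE.charpoly.IsRoot ν → ν = μ := by
        intro ν hν
        obtain ⟨w, hw, hCw⟩ := (isRoot_charpoly_iff CE ν).1 hν
        have hw1 : (w : W) ≠ 0 := fun hcon => hw (Subtype.ext hcon)
        have hcoe : C (w : W) = ν • (w : W) := by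
          exact congrArg Subtype.val hCw
        have hgw : g (w : W) = (ν - μ) • (w : W) := by
          simp only [hgdef, LinearMap.sub_apply, LinearMap.smul_apply, Module.End.one_apply, hcoe,
            sub_smul]
        have hpow : h₁ (w : W) = (ν - μ) ^ d • (w : W) := eig_pow_smul g hgw d
        have hker : h₁ (w : W) = 0 := w.2
        rw [hker] at hpow
        have : (ν - μ) ^ d = 0 := by
          by_contra hcon
          exact hw1 (by
            have := hpow.symm
            rw [smul_eq_zero] at this
            tauto)
        have := pow_eq_zero_iff hd0 |>.mp this
        linarith [sub_eq_zero.mp this]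
      have hCEpos : 0 < LinearMap.det CE := by
        rcases lt_or_gt_of_ne hμ0 with hμneg | hμpos
        · have h1 := sign_det_of_roots_neg CE (fun ν hν => by rw [hCEroots ν hν]; exact hμneg)
          have heven : Even (finrank ℝ E) := by
            by_contra hoddE
            rw [Nat.not_even_iff_odd] at hoddE
            obtain ⟨w, hw0, hwfix⟩ := fixed_point_lemma hp hodd hH (finrank ℝ E) ↥E
              inferInstance inferInstance inferInstance (restrictSub ρ E hρE) le_rfl hoddE
            apply hw0
            apply Subtype.ext
            show (w : W) = 0
            apply hfix
            intro h
            have := congrArg Subtype.val (hwfix h)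
            simpa [restrictSub_apply] using this
          rw [heven.neg_one_pow, one_mul] at h1
          exact h1
        · exact det_pos_of_roots_pos CE (fun ν hν => by rw [hCEroots ν hν]; exact hμpos)
      have hCFpos : 0 < LinearMap.det CF := by
        apply IH ↥F inferInstance inferInstance inferInstance (restrictSub ρ F hρF) CF
        · omega
        · intro w hwfix
          apply Subtype.ext
          show (w : W) = 0
          apply hfix
          intro h
          have := congrArg Subtype.val (hwfix h)
          simpa [restrictSub_apply] using this
        · intro h
          exact (LinearMap.restrict_commute (hC h) hCF (hρF h)).eq
        · exact hdetF
      exact mul_pos hCEpos hCFpos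
    · apply det_pos_of_roots_pos
      intro μ hμ
      exact absurd ⟨μ, hμ⟩ hroot

end POS

section MainHelpers

variable {W : Type*} [AddCommGroup W] [Module ℝ W]

lemma restrict_pow_one (f : Module.End ℝ W) {E : Submodule ℝ W} (hf : ∀ x ∈ E, f x ∈ E)
    {m : ℕ} (h : f ^ m = 1) : (f.restrict hf) ^ m = 1 := by
  rw [Module.End.pow_restrict]
  apply LinearMap.ext; rintro ⟨x, hx⟩; apply Subtype.ext
  simp [LinearMap.restrict_apply, h]

lemma isCompl_ker_range_idem (π : Module.End ℝ W) (hidem : ∀ x, π (π x) = π x) :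
    IsCompl (LinearMap.ker π) (LinearMap.range π) := by
  constructor
  · rw [disjoint_iff]
    apply le_bot_iff.mp
    rintro x ⟨hk, y, rfl⟩
    simp only [SetLike.mem_coe, LinearMap.mem_ker] at hk
    have h2 : π (π y) = π y := hidem y
    rw [hk] at h2
    simp [Submodule.mem_bot, ← h2]
  · rw [codisjoint_iff, eq_top_iff]
    intro x _
    have hx : x = (x - π x) + π x := by abel
    rw [hx]
    apply Submodule.add_mem_sup
    · simp only [LinearMap.mem_ker, map_sub]
      rw [hidem x, sub_self]
    · exact ⟨x, rfl⟩

lemma fixed_by_all {G : Type*} [Group G] (P : Subgroup G) (t : G)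
    (hgen : P ⊔ Subgroup.zpowers t = ⊤) (ρ : Representation ℝ G W) (u : W)
    (hP : ∀ x ∈ P, ρ x u = u) (ht : ρ t u = u) : ∀ g : G, ρ g u = u := by
  set S : Subgroup G :=
    { carrier := {g : G | ρ g u = u}
      one_mem' := by simp
      mul_mem' := by
        intro a b ha hb
        simp only [Set.mem_setOf_eq] at *
        rw [map_mul, Module.End.mul_apply, hb, ha]
      inv_mem' := by
        intro a ha
        simp only [Set.mem_setOf_eq] at *
        conv_lhs => rw [← ha]
        rw [← Module.End.mul_apply, ← map_mul, inv_mul_cancel, map_one, Module.End.one_apply] }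
    with hS
  have hle : P ⊔ Subgroup.zpowers t ≤ S := sup_le (fun x hx => hP x hx) (Subgroup.zpowers_le.mpr ht)
  rw [hgen] at hle
  intro g
  exact hle (Subgroup.mem_top g)

end MainHelpers

set_option maxHeartbeats 2000000 in
theorem stmt16 {G : Type*} [Group G] [Finite G] (p : ℕ) (hp : p.Prime) (hodd : Odd p)
    (P : Subgroup G) [P.Normal] (hP : IsPGroup p P)
    (t : G) (ht : ∃ k : ℕ, orderOf t = 2 ^ k)
    (hgen : P ⊔ Subgroup.zpowers t = ⊤)
    {U V : Type*} [AddCommGroup U] [Module ℝ U] [FiniteDimensional ℝ U]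
    [AddCommGroup V] [Module ℝ V] [FiniteDimensional ℝ V]
    [Nontrivial U] [Nontrivial V]
    (ρU : Representation ℝ G U) (ρV : Representation ℝ G V)
    (hUG : ∀ u : U, (∀ g : G, ρU g u = u) → u = 0)
    (hVG : ∀ v : V, (∀ g : G, ρV g v = v) → v = 0)
    (hiso : ∃ e : U ≃ₗ[ℝ] V, ∀ g ∈ P, ∀ u : U, e (ρU g u) = ρV g (e u)) :
    LinearMap.det (ρU t) = LinearMap.det (ρV t) := by
  classical
  obtain ⟨k, hk⟩ := ht
  obtain ⟨e, he⟩ := hiso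
  haveI : Fintype ↥P := Fintype.ofFinite _
  have h2k : (2 : ℕ) ^ k ≠ 0 := pow_ne_zero k two_ne_zero
  set ρP : Representation ℝ ↥P U := ρU.comp P.subtype with hρPdef
  have hρPapp : ∀ x : ↥P, ρP x = ρU (x : G) := fun x => rfl
  set f : Module.End ℝ U := ρU t with hfdef
  set f' : Module.End ℝ U := ρU t⁻¹ with hf'def
  set g : Module.End ℝ U := e.symm.toLinearMap ∘ₗ (ρV t : Module.End ℝ V) ∘ₗ e.toLinearMap
    with hgdef
  have hff' : f * f' = 1 := by rw [hfdef, hf'def, ← map_mul, mul_inv_cancel, map_one]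
  have hf'f : f' * f = 1 := by rw [hfdef, hf'def, ← map_mul, inv_mul_cancel, map_one]
  have hfm : f ^ (2 ^ k) = 1 := by rw [hfdef, ← map_pow, ← hk, pow_orderOf_eq_one, map_one]
  have hVt : (ρV t : Module.End ℝ V) ^ (2 ^ k) = 1 := by
    rw [← map_pow, ← hk, pow_orderOf_eq_one, map_one]
  have hgpow : ∀ m : ℕ, g ^ m = e.symm.toLinearMap ∘ₗ ((ρV t) ^ m) ∘ₗ e.toLinearMap := by
    intro m
    induction m with
    | zero =>
      apply LinearMap.ext; intro u
      simp
    | succ m ih =>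
      rw [pow_succ, ih]
      apply LinearMap.ext; intro u
      simp only [Module.End.mul_apply, LinearMap.coe_comp, Function.comp_apply,
        LinearEquiv.coe_coe, hgdef, LinearEquiv.apply_symm_apply, pow_succ]
  have hgm : g ^ (2 ^ k) = 1 := by
    rw [hgpow, hVt]
    apply LinearMap.ext; intro u
    simp
  have hdetg : LinearMap.det g = LinearMap.det (ρV t) := by
    have h1 : g = (e.symm : V →ₗ[ℝ] U) ∘ₗ (ρV t : Module.End ℝ V) ∘ₗ (e.symm.symm : U →ₗ[ℝ] V) := by
      rw [e.symm_symm]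
    rw [h1, LinearMap.det_conj (ρV t) e.symm]
  have hdetf1 : LinearMap.det f * LinearMap.det f' = 1 := by
    rw [← LinearMap.det_comp, ← Module.End.mul_eq_comp, hff']
    simp
  have hdetf_ne : LinearMap.det f ≠ 0 := fun hcon => by rw [hcon, zero_mul] at hdetf1; simp at hdetf1
  have hdetf'_ne : LinearMap.det f' ≠ 0 := fun hcon => by rw [hcon, mul_zero] at hdetf1; simp at hdetf1
  have hdetg_ne : LinearMap.det g ≠ 0 := by
    rw [hdetg]
    have h1 : ρV t * ρV t⁻¹ = 1 := by rw [← map_mul, mul_inv_cancel, map_one]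
    have h2 : LinearMap.det (ρV t) * LinearMap.det (ρV t⁻¹) = 1 := by
      rw [← LinearMap.det_comp, ← Module.End.mul_eq_comp, h1]; simp
    exact fun hcon => by rw [hcon, zero_mul] at h2; simp at h2
  -- conjugation equivalence on ↥P
  have hnorm : P.Normal := inferInstance
  have hmem1 : ∀ x : ↥P, t * (x : G) * t⁻¹ ∈ P := fun x => hnorm.conj_mem x.1 x.2 t
  have hmem2 : ∀ x : ↥P, t⁻¹ * (x : G) * t ∈ P := fun x => by
    simpa using hnorm.conj_mem x.1 x.2 t⁻¹
  set φ : ↥P ≃ ↥P :=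
    { toFun := fun x => ⟨t * x * t⁻¹, hmem1 x⟩
      invFun := fun x => ⟨t⁻¹ * x * t, hmem2 x⟩
      left_inv := fun x => by ext; simp [mul_assoc]
      right_inv := fun x => by ext; simp [mul_assoc] } with hφdef
  have hfP : ∀ x : ↥P, f * ρP x = ρP (φ x) * f := by
    intro x
    rw [hρPapp, hρPapp, hfdef, ← map_mul, ← map_mul]
    congr 1
    show t * (x : G) = ((φ x : ↥P) : G) * t
    simp [hφdef]
  have hf'P : ∀ x : ↥P, f' * ρP x = ρP (φ.symm x) * f' := by
    intro x
    rw [hρPapp, hρPapp, hf'def, ← map_mul, ← map_mul]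
    congr 1
    show t⁻¹ * (x : G) = ((φ.symm x : ↥P) : G) * t⁻¹
    simp [hφdef]
  have hgP : ∀ x : ↥P, g * ρP x = ρP (φ x) * g := by
    intro x
    apply LinearMap.ext; intro u
    have hL : (g * ρP x) u = e.symm (ρV (t * (x : G)) (e u)) := by
      simp only [Module.End.mul_apply, hgdef, LinearMap.coe_comp, Function.comp_apply,
        LinearEquiv.coe_coe, hρPapp]
      rw [he (x : G) x.2 u, ← Module.End.mul_apply (ρV t) (ρV (x:G)), ← map_mul]
    have hR : (ρP (φ x) * g) u = e.symm (ρV (t * (x : G)) (e u)) := by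
      simp only [Module.End.mul_apply, hgdef, LinearMap.coe_comp, Function.comp_apply,
        LinearEquiv.coe_coe, hρPapp]
      have hy := he ((φ x : ↥P) : G) (φ x).2 (e.symm (ρV t (e u)))
      have hy2 : ρU ((φ x : ↥P) : G) (e.symm (ρV t (e u)))
          = e.symm (ρV ((φ x : ↥P) : G) (ρV t (e u))) := by
        apply e.injective
        rw [hy, e.apply_symm_apply, e.apply_symm_apply]
      rw [hy2, ← Module.End.mul_apply (ρV _) (ρV t), ← map_mul]
      congr 3
      show ((φ x : ↥P) : G) * t = t * (x : G)
      simp [hφdef]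
    rw [hL, hR]
  -- the averaging projection
  set c : ℝ := (Fintype.card ↥P : ℝ) with hc
  have hc0 : c ≠ 0 := by
    have : (0 : ℝ) < c := by rw [hc]; exact_mod_cast Fintype.card_pos
    linarith
  set π : Module.End ℝ U := c⁻¹ • ∑ x : ↥P, (ρP x : Module.End ℝ U) with hπdef
  have hleft : ∀ y : ↥P, ρP y * π = π := by
    intro y
    rw [hπdef, mul_smul_comm, Finset.mul_sum]
    congr 1
    calc ∑ x : ↥P, (ρP y : Module.End ℝ U) * ρP x
        = ∑ x : ↥P, (ρP (y * x) : Module.End ℝ U) := by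
          apply Finset.sum_congr rfl; intro x _; rw [← map_mul]
      _ = ∑ x : ↥P, (ρP x : Module.End ℝ U) := Equiv.sum_comp (Equiv.mulLeft y) _
  have hright : ∀ y : ↥P, π * ρP y = π := by
    intro y
    rw [hπdef, smul_mul_assoc, Finset.sum_mul]
    congr 1
    calc ∑ x : ↥P, (ρP x : Module.End ℝ U) * ρP y
        = ∑ x : ↥P, (ρP (x * y) : Module.End ℝ U) := by
          apply Finset.sum_congr rfl; intro x _; rw [← map_mul]
      _ = ∑ x : ↥P, (ρP x : Module.End ℝ U) := Equiv.sum_comp (Equiv.mulRight y) _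
  have hππ : π * π = π := by
    nth_rewrite 1 [hπdef]
    rw [smul_mul_assoc, Finset.sum_mul]
    rw [Finset.sum_congr rfl (fun x _ => hleft x), Finset.sum_const, Finset.card_univ,
      ← Nat.cast_smul_eq_nsmul ℝ, smul_smul, ← hc, inv_mul_cancel₀ hc0, one_smul]
  have hidem : ∀ u : U, π (π u) = π u := fun u => by rw [← Module.End.mul_apply, hππ]
  have hfixavg : ∀ u : U, (∀ x : ↥P, ρP x u = u) → π u = u := by
    intro u hu
    rw [hπdef]
    simp only [LinearMap.smul_apply, LinearMap.coe_sum, Finset.sum_apply]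
    rw [Finset.sum_congr rfl (fun x _ => hu x), Finset.sum_const, Finset.card_univ,
      ← Nat.cast_smul_eq_nsmul ℝ, smul_smul, ← hc, inv_mul_cancel₀ hc0, one_smul]
  have hrangeP : ∀ u ∈ LinearMap.range π, ∀ x : ↥P, ρP x u = u := by
    rintro u ⟨w, rfl⟩ x
    rw [← Module.End.mul_apply, hleft]
  have hcompl := isCompl_ker_range_idem π hidem
  -- commutation of f, f', g with π
  have hfπ : f * π = π * f := by
    rw [hπdef, mul_smul_comm, smul_mul_assoc, Finset.mul_sum, Finset.sum_mul]
    congr 1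
    rw [Finset.sum_congr rfl (fun x _ => hfP x)]
    exact Equiv.sum_comp φ (fun y => (ρP y : Module.End ℝ U) * f)
  have hgπ : g * π = π * g := by
    rw [hπdef, mul_smul_comm, smul_mul_assoc, Finset.mul_sum, Finset.sum_mul]
    congr 1
    rw [Finset.sum_congr rfl (fun x _ => hgP x)]
    exact Equiv.sum_comp φ (fun y => (ρP y : Module.End ℝ U) * g)
  have hf'π : f' * π = π * f' := by
    have h : f' * (f * π) * f' = f' * (π * f) * f' := by rw [hfπ]
    rw [← mul_assoc f' f π, hf'f, one_mul] at h
    rw [← mul_assoc f' π f, mul_assoc (f' * π) f f', hff', mul_one] at h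
    exact h.symm
  -- submodules
  set W₁ : Submodule ℝ U := LinearMap.ker π with hW₁
  set W₀ : Submodule ℝ U := LinearMap.range π with hW₀
  have hker_maps : ∀ {h : Module.End ℝ U}, h * π = π * h → Set.MapsTo h W₁ W₁ := by
    intro h hcomm x hx
    simp only [SetLike.mem_coe, hW₁, LinearMap.mem_ker] at hx ⊢
    rw [← Module.End.mul_apply, ← hcomm, Module.End.mul_apply, hx, map_zero]
  have hrange_maps : ∀ {h : Module.End ℝ U}, h * π = π * h → Set.MapsTo h W₀ W₀ := by
    rintro h hcomm x ⟨y, rfl⟩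
    exact ⟨h y, by rw [← Module.End.mul_apply, ← hcomm, Module.End.mul_apply]⟩
  have hfW₁ : Set.MapsTo f W₁ W₁ := hker_maps hfπ
  have hf'W₁ : Set.MapsTo f' W₁ W₁ := hker_maps hf'π
  have hgW₁ : Set.MapsTo g W₁ W₁ := hker_maps hgπ
  have hfW₀ : Set.MapsTo f W₀ W₀ := hrange_maps hfπ
  have hgW₀ : Set.MapsTo g W₀ W₀ := hrange_maps hgπ
  have hρW₁ : ∀ x : ↥P, Set.MapsTo (ρP x) W₁ W₁ := fun x => hker_maps (by rw [hleft, hright])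
  -- determinants on W₀
  have hfix0f : ∀ v : ↥W₀, (f.restrict hfW₀) v = v → v = 0 := by
    intro v hv
    apply Subtype.ext
    show (v : U) = 0
    apply hUG
    apply fixed_by_all P t hgen ρU (v : U)
    · intro x hx
      exact hrangeP (v : U) v.2 ⟨x, hx⟩
    · have := congrArg Subtype.val hv
      exact this
  have hdetf0 : LinearMap.det (f.restrict hfW₀) = (-1 : ℝ) ^ (finrank ℝ W₀) :=
    det_of_twopow_order _ k (restrict_pow_one f hfW₀ hfm) hfix0f
  have hfix0g : ∀ v : ↥W₀, (g.restrict hgW₀) v = v → v = 0 := by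
    intro v hv
    have hgv : g (v : U) = (v : U) := by
      have := congrArg Subtype.val hv
      exact this
    have hfixP : ∀ x ∈ P, ρU x (v : U) = (v : U) := fun x hx => hrangeP (v : U) v.2 ⟨x, hx⟩
    have hev : ρV t (e (v : U)) = e (v : U) := by
      have h1 : e (g (v : U)) = ρV t (e (v : U)) := by
        simp only [hgdef, LinearMap.coe_comp, Function.comp_apply, LinearEquiv.coe_coe,
          LinearEquiv.apply_symm_apply]
      rw [hgv] at h1
      exact h1.symm
    have hevP : ∀ x ∈ P, ρV x (e (v : U)) = e (v : U) := by
      intro x hx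
      rw [← he x hx, hfixP x hx]
    have : e (v : U) = 0 := hVG _ (fixed_by_all P t hgen ρV (e (v : U)) hevP hev)
    apply Subtype.ext
    show (v : U) = 0
    exact (LinearEquiv.map_eq_zero_iff e).mp this
  have hdetg0 : LinearMap.det (g.restrict hgW₀) = (-1 : ℝ) ^ (finrank ℝ W₀) :=
    det_of_twopow_order _ k (restrict_pow_one g hgW₀ hgm) hfix0g
  -- determinant split
  have hsplitf := det_split f hcompl hfW₁ hfW₀
  have hsplitg := det_split g hcompl hgW₁ hgW₀
  -- the comparison endomorphism on W₁
  set Cfull : Module.End ℝ U := g * f' with hCfulldef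
  have hCP : ∀ x : ↥P, Cfull * ρP x = ρP x * Cfull := by
    intro x
    calc Cfull * ρP x = g * (f' * ρP x) := by rw [hCfulldef, mul_assoc]
      _ = g * (ρP (φ.symm x) * f') := by rw [hf'P x]
      _ = (g * ρP (φ.symm x)) * f' := by rw [mul_assoc]
      _ = (ρP (φ (φ.symm x)) * g) * f' := by rw [hgP _]
      _ = ρP x * Cfull := by rw [φ.apply_symm_apply, hCfulldef, mul_assoc]
  have hCW₁ : Set.MapsTo Cfull W₁ W₁ := by
    intro x hx
    have h1 : Cfull x = g (f' x) := rfl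
    rw [SetLike.mem_coe] at hx ⊢
    rw [h1]
    exact hgW₁ (hf'W₁ hx)
  have hCrest : Cfull.restrict hCW₁ = (g.restrict hgW₁) ∘ₗ (f'.restrict hf'W₁) := by
    rw [← LinearMap.restrict_comp hf'W₁ hgW₁]
    rfl
  have hdetC : LinearMap.det (Cfull.restrict hCW₁)
      = LinearMap.det (g.restrict hgW₁) * LinearMap.det (f'.restrict hf'W₁) := by
    rw [hCrest, LinearMap.det_comp]
  have hdetf1' : LinearMap.det (f.restrict hfW₁) * LinearMap.det (f'.restrict hf'W₁) = 1 := by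
    rw [← LinearMap.det_comp, ← LinearMap.restrict_comp hf'W₁ hfW₁]
    have h1 : f ∘ₗ f' = (1 : Module.End ℝ U) := by rw [← Module.End.mul_eq_comp, hff']
    have h2 : (f ∘ₗ f').restrict (fun x hx => hfW₁ (hf'W₁ hx)) = 1 := by
      apply LinearMap.ext; rintro ⟨x, hx⟩; apply Subtype.ext
      simp [LinearMap.restrict_apply, h1]
    rw [h2]
    simp
  have hfixW₁ : ∀ w : ↥W₁, (∀ x : ↥P, (restrictSub ρP W₁ hρW₁) x w = w) → w = 0 := by
    intro w hw
    apply Subtype.ext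
    show (w : U) = 0
    have h1 : π (w : U) = (w : U) := by
      apply hfixavg
      intro x
      have := congrArg Subtype.val (hw x)
      simpa [restrictSub_apply] using this
    have h2 : π (w : U) = 0 := w.2
    rw [h2] at h1
    exact h1.symm
  have hdetC_ne : LinearMap.det (Cfull.restrict hCW₁) ≠ 0 := by
    rw [hdetC]
    apply mul_ne_zero
    · intro hcon
      rw [hsplitg, hcon, zero_mul] at hdetg_ne
      exact hdetg_ne rfl
    · intro hcon
      rw [hcon, mul_zero] at hdetf1'
      simp at hdetf1'
  have hCpos : 0 < LinearMap.det (Cfull.restrict hCW₁) := by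
    apply det_pos_of_commute hp hodd hP (finrank ℝ W₁) ↥W₁ inferInstance inferInstance
      inferInstance (restrictSub ρP W₁ hρW₁) (Cfull.restrict hCW₁) le_rfl hfixW₁ _ hdetC_ne
    intro x
    exact (LinearMap.restrict_commute (hCP x) hCW₁ (hρW₁ x)).eq
  -- final bookkeeping
  have hdetfpm : LinearMap.det f = 1 ∨ LinearMap.det f = -1 := by
    apply real_pm_one h2k
    rw [← map_pow, hfm]
    simp
  have hdetgpm : LinearMap.det g = 1 ∨ LinearMap.det g = -1 := by
    apply real_pm_one h2k
    rw [← map_pow, hgm]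
    simp
  set a : ℝ := LinearMap.det (f.restrict hfW₁) with ha
  set b : ℝ := LinearMap.det (g.restrict hgW₁) with hb
  set a' : ℝ := LinearMap.det (f'.restrict hf'W₁) with ha'
  set s : ℝ := (-1 : ℝ) ^ (finrank ℝ W₀) with hs
  have hss : s * s = 1 := by
    rw [hs, ← pow_add]
    simp [← two_mul]
  have hCposab : 0 < b * a' := by
    rw [ha', hb, ← hdetC]
    exact hCpos
  -- hsplitf : det f = a * s ; hsplitg : det g = b * s
  rw [hdetf0] at hsplitf
  rw [hdetg0] at hsplitg
  rw [← hdetg]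
  rw [hsplitf, hsplitg]
  have haa' : a * a' = 1 := hdetf1'
  rw [hsplitf] at hdetfpm
  rw [hsplitg] at hdetgpm
  rcases hdetfpm with h1 | h1 <;> rcases hdetgpm with h2 | h2 <;>
    [skip; exfalso; exfalso; skip] <;> nlinarith [hss, haa', hCposab, h1, h2]
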